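/- Let Γ be a weighted signed forest on n vertices with m₊ positive edges, m₋ negative edges, and c connected components. Then the Laplacian inertia of Γ is (m₋, m₊, n − m₊ − m₋); equivalently, L(Γ) has exactly m₋ positive eigenvalues, m₊ negative eigenvalues, and nullity equal to c. -/

import Mathlib

open scoped Classical
open Polynomial
open Matrix

namespace SGPaper

/-- A weighted signed graph on `n` vertices, given by its symmetric hollow
matrix of edge weights (a nonzero entry `w i j` is the weight of the edge `ij`;
positive edges have positive weight, negative edges negative weight). -/
structure WSG (n : ℕ) where
  w : Matrix (Fin n) (Fin n) ℝ
  symm : w.IsSymm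
  loopless : ∀ i, w i i = 0

variable {n : ℕ}

/-- The underlying simple graph. -/
def WSG.graph (Γ : WSG n) : SimpleGraph (Fin n) :=
  SimpleGraph.fromRel (fun i j => Γ.w i j ≠ 0)

/-- The spanning subgraph of positive edges. -/
def WSG.posGraph (Γ : WSG n) : SimpleGraph (Fin n) :=
  SimpleGraph.fromRel (fun i j => 0 < Γ.w i j)

/-- The spanning subgraph of negative edges. -/
def WSG.negGraph (Γ : WSG n) : SimpleGraph (Fin n) :=
  SimpleGraph.fromRel (fun i j => Γ.w i j < 0)

/-- Number of connected components of a graph. -/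
noncomputable def comps {V : Type*} (G : SimpleGraph V) : ℕ :=
  Nat.card G.ConnectedComponent

/-- Weighted Laplacian `L = A - D`. -/
def WSG.lap (Γ : WSG n) : Matrix (Fin n) (Fin n) ℝ :=
  Γ.w - Matrix.diagonal (fun i => ∑ j, Γ.w i j)

theorem WSG.lap_isHermitian (Γ : WSG n) : Γ.lap.IsHermitian := by
  have h : Γ.lap.IsSymm := Γ.symm.sub (Matrix.isSymm_diagonal _)
  show Matrix.conjTranspose Γ.lap = Γ.lap
  rw [Matrix.conjTranspose_eq_transpose_of_trivial]
  exact h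

/-- Number of positive eigenvalues of the Laplacian. -/
noncomputable def WSG.nPos (Γ : WSG n) : ℕ :=
  (Finset.univ.filter fun i => 0 < Γ.lap_isHermitian.eigenvalues i).card

/-- Number of negative eigenvalues of the Laplacian. -/
noncomputable def WSG.nNeg (Γ : WSG n) : ℕ :=
  (Finset.univ.filter fun i => Γ.lap_isHermitian.eigenvalues i < 0).card

/-- Multiplicity of `0` as an eigenvalue of the Laplacian. -/
noncomputable def WSG.nZero (Γ : WSG n) : ℕ :=
  (Finset.univ.filter fun i => Γ.lap_isHermitian.eigenvalues i = 0).card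

/-- The Laplacian inertia `(n₊, n₋, n₀)`. -/
noncomputable def WSG.inertia (Γ : WSG n) : ℕ × ℕ × ℕ := (Γ.nPos, Γ.nNeg, Γ.nZero)

/-! ### Auxiliary linear algebra -/

section LinAlg

open Matrix

variable {N : ℕ}

lemma dot_sum {ι : Type*} (s : Finset ι) (v : Fin N → ℝ) (g : ι → Fin N → ℝ) :
    v ⬝ᵥ (∑ i ∈ s, g i) = ∑ i ∈ s, v ⬝ᵥ g i := by
  simp only [dotProduct, Finset.sum_apply, Finset.mul_sum]
  exact Finset.sum_comm

lemma sum_dot {ι : Type*} (s : Finset ι) (v : Fin N → ℝ) (g : ι → Fin N → ℝ) :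
    (∑ i ∈ s, g i) ⬝ᵥ v = ∑ i ∈ s, g i ⬝ᵥ v := by
  simp only [dotProduct, Finset.sum_apply, Finset.sum_mul]
  exact Finset.sum_comm

lemma mulVec_sumv {ι : Type*} (s : Finset ι) (A : Matrix (Fin N) (Fin N) ℝ)
    (g : ι → Fin N → ℝ) : A *ᵥ (∑ i ∈ s, g i) = ∑ i ∈ s, A *ᵥ g i := by
  funext k
  simp only [Matrix.mulVec, dotProduct, Finset.sum_apply, Finset.mul_sum]
  exact Finset.sum_comm

lemma matSum_mulVec {ι : Type*} (s : Finset ι) (f : ι → Matrix (Fin N) (Fin N) ℝ)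
    (x : Fin N → ℝ) : (∑ i ∈ s, f i) *ᵥ x = ∑ i ∈ s, f i *ᵥ x := by
  funext k
  simp only [Matrix.mulVec, dotProduct, Matrix.sum_apply, Finset.sum_apply,
    Finset.sum_mul]
  exact Finset.sum_comm

lemma vecMulVec_mulVec' (u v x : Fin N → ℝ) :
    Matrix.vecMulVec u v *ᵥ x = (v ⬝ᵥ x) • u := by
  funext k
  simp only [Matrix.mulVec, dotProduct, Matrix.vecMulVec_apply, Pi.smul_apply,
    smul_eq_mul, Finset.sum_mul, Finset.mul_sum]
  exact Finset.sum_congr rfl fun j _ => by ring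

lemma li_of_dual {ι : Type*} [Fintype ι] [DecidableEq ι] (v f : ι → (Fin N → ℝ))
    (h : ∀ i j, v i ⬝ᵥ f j = if i = j then 1 else 0) : LinearIndependent ℝ f := by
  rw [Fintype.linearIndependent_iff]
  intro g hg i
  have h2 := congrArg (fun x => v i ⬝ᵥ x) hg
  simp only [dot_sum, dotProduct_smul, h, smul_eq_mul, mul_ite, mul_one, mul_zero,
    Finset.sum_ite_eq, Finset.mem_univ, if_true, dotProduct_zero] at h2
  exact h2

variable {A : Matrix (Fin N) (Fin N) ℝ}

lemma dot_ortho (hA : A.IsHermitian) (i j : Fin N) :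
    (⇑(hA.eigenvectorBasis i) : Fin N → ℝ) ⬝ᵥ ⇑(hA.eigenvectorBasis j)
      = if i = j then 1 else 0 := by
  have h := orthonormal_iff_ite.mp hA.eigenvectorBasis.orthonormal i j
  rw [PiLp.inner_apply] at h
  simpa [dotProduct, RCLike.inner_apply, mul_comm] using h

lemma quad_form_span (hA : A.IsHermitian) (t : Finset (Fin N)) (c : ↥t → ℝ) :
    (∑ i : ↥t, c i • (⇑(hA.eigenvectorBasis i.1) : Fin N → ℝ)) ⬝ᵥ
      (A *ᵥ ∑ i : ↥t, c i • (⇑(hA.eigenvectorBasis i.1) : Fin N → ℝ))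
      = ∑ i : ↥t, hA.eigenvalues i.1 * c i ^ 2 := by
  rw [mulVec_sumv, sum_dot]
  have hterm : ∀ j : ↥t, A *ᵥ (c j • (⇑(hA.eigenvectorBasis j.1) : Fin N → ℝ))
      = c j • hA.eigenvalues j.1 • (⇑(hA.eigenvectorBasis j.1) : Fin N → ℝ) := by
    intro j
    rw [Matrix.mulVec_smul, hA.mulVec_eigenvectorBasis]
  have hsum : ∀ i : ↥t, ∑ j : ↥t, c i * (c j * (hA.eigenvalues j.1 *
      if i.1 = j.1 then 1 else 0)) = hA.eigenvalues i.1 * c i ^ 2 := by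
    intro i
    rw [Finset.sum_eq_single i]
    · simp; ring
    · intro j _ hj
      have : ¬ (i.1 = j.1) := fun h => hj.symm (Subtype.ext h)
      simp [this]
    · simp
  calc ∑ i : ↥t, (c i • (⇑(hA.eigenvectorBasis i.1) : Fin N → ℝ)) ⬝ᵥ
        (∑ j : ↥t, A *ᵥ (c j • (⇑(hA.eigenvectorBasis j.1) : Fin N → ℝ)))
      = ∑ i : ↥t, ∑ j : ↥t, c i * (c j * (hA.eigenvalues j.1 *
          if i.1 = j.1 then 1 else 0)) := by
        refine Finset.sum_congr rfl fun i _ => ?_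
        rw [dot_sum]
        refine Finset.sum_congr rfl fun j _ => ?_
        rw [hterm j, smul_dotProduct, dotProduct_smul, dotProduct_smul,
          dot_ortho hA]
        simp [mul_assoc]
    _ = _ := Finset.sum_congr rfl fun i _ => hsum i

lemma finrank_le_card_pos (hA : A.IsHermitian) (W : Submodule ℝ (Fin N → ℝ))
    (hW : ∀ x ∈ W, x ≠ 0 → 0 < x ⬝ᵥ (A *ᵥ x)) :
    Module.finrank ℝ W ≤ (Finset.univ.filter fun i => 0 < hA.eigenvalues i).card := by
  set t := Finset.univ.filter (fun i => ¬ 0 < hA.eigenvalues i) with ht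
  set u : ↥t → (Fin N → ℝ) := fun i => ⇑(hA.eigenvectorBasis i.1) with hu
  have hdualu : ∀ i j : ↥t, u i ⬝ᵥ u j = if i = j then 1 else 0 := by
    intro i j
    rw [hu]
    simp only [dot_ortho hA i.1 j.1]
    by_cases h : i = j
    · simp [h]
    · have : ¬ (i.1 = j.1) := fun hh => h (Subtype.ext hh)
      simp [h, this]
  have hli := li_of_dual u u hdualu
  set NN := Submodule.span ℝ (Set.range u) with hNN
  have hNrank : Module.finrank ℝ NN = t.card := by
    rw [hNN, finrank_span_eq_card hli, Fintype.card_coe]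
  have hNform : ∀ x ∈ NN, x ⬝ᵥ (A *ᵥ x) ≤ 0 := by
    intro x hx
    obtain ⟨c, hc⟩ := Submodule.mem_span_range_iff_exists_fun ℝ |>.mp hx
    rw [← hc, quad_form_span hA t c]
    apply Finset.sum_nonpos
    intro i _
    have hi : ¬ 0 < hA.eigenvalues i.1 := (Finset.mem_filter.mp i.2).2
    nlinarith [sq_nonneg (c i), le_of_not_gt hi]
  have hdisj : W ⊓ NN = ⊥ := by
    rw [Submodule.eq_bot_iff]
    intro x hx
    by_contra hx0
    exact absurd (hNform x hx.2) (not_le.mpr (hW x hx.1 hx0))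
  have h1 := Submodule.finrank_sup_add_finrank_inf_eq W NN
  rw [hdisj, finrank_bot] at h1
  have h2 : Module.finrank ℝ ↥(W ⊔ NN) ≤ N := by
    simpa [Module.finrank_fintype_fun_eq_card] using Submodule.finrank_le (W ⊔ NN)
  have h3 : (Finset.univ.filter fun i => 0 < hA.eigenvalues i).card + t.card = N := by
    rw [ht]
    simpa using Finset.card_filter_add_card_filter_not
      (s := (Finset.univ : Finset (Fin N))) (p := fun i => 0 < hA.eigenvalues i)
  omega

lemma finrank_le_card_neg (hA : A.IsHermitian) (W : Submodule ℝ (Fin N → ℝ))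
    (hW : ∀ x ∈ W, x ≠ 0 → x ⬝ᵥ (A *ᵥ x) < 0) :
    Module.finrank ℝ W ≤ (Finset.univ.filter fun i => hA.eigenvalues i < 0).card := by
  set t := Finset.univ.filter (fun i => ¬ hA.eigenvalues i < 0) with ht
  set u : ↥t → (Fin N → ℝ) := fun i => ⇑(hA.eigenvectorBasis i.1) with hu
  have hdualu : ∀ i j : ↥t, u i ⬝ᵥ u j = if i = j then 1 else 0 := by
    intro i j
    rw [hu]
    simp only [dot_ortho hA i.1 j.1]
    by_cases h : i = j
    · simp [h]
    · have : ¬ (i.1 = j.1) := fun hh => h (Subtype.ext hh)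
      simp [h, this]
  have hli := li_of_dual u u hdualu
  set NN := Submodule.span ℝ (Set.range u) with hNN
  have hNrank : Module.finrank ℝ NN = t.card := by
    rw [hNN, finrank_span_eq_card hli, Fintype.card_coe]
  have hNform : ∀ x ∈ NN, 0 ≤ x ⬝ᵥ (A *ᵥ x) := by
    intro x hx
    obtain ⟨c, hc⟩ := Submodule.mem_span_range_iff_exists_fun ℝ |>.mp hx
    rw [← hc, quad_form_span hA t c]
    apply Finset.sum_nonneg
    intro i _
    have hi : ¬ hA.eigenvalues i.1 < 0 := (Finset.mem_filter.mp i.2).2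
    nlinarith [sq_nonneg (c i), le_of_not_gt hi]
  have hdisj : W ⊓ NN = ⊥ := by
    rw [Submodule.eq_bot_iff]
    intro x hx
    by_contra hx0
    exact absurd (hNform x hx.2) (not_le.mpr (hW x hx.1 hx0))
  have h1 := Submodule.finrank_sup_add_finrank_inf_eq W NN
  rw [hdisj, finrank_bot] at h1
  have h2 : Module.finrank ℝ ↥(W ⊔ NN) ≤ N := by
    simpa [Module.finrank_fintype_fun_eq_card] using Submodule.finrank_le (W ⊔ NN)
  have h3 : (Finset.univ.filter fun i => hA.eigenvalues i < 0).card + t.card = N := by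
    rw [ht]
    simpa using Finset.card_filter_add_card_filter_not
      (s := (Finset.univ : Finset (Fin N))) (p := fun i => hA.eigenvalues i < 0)
  omega

lemma rank_add_le' (A B : Matrix (Fin N) (Fin N) ℝ) : (A + B).rank ≤ A.rank + B.rank := by
  rw [Matrix.rank, Matrix.rank, Matrix.rank, Matrix.mulVecLin_add]
  have hle : LinearMap.range (A.mulVecLin + B.mulVecLin)
      ≤ LinearMap.range A.mulVecLin ⊔ LinearMap.range B.mulVecLin := by
    rintro y ⟨x, rfl⟩
    exact Submodule.add_mem_sup (LinearMap.mem_range_self _ x) (LinearMap.mem_range_self _ x)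
  have h1 := Submodule.finrank_mono hle
  have h2 := Submodule.finrank_sup_add_finrank_inf_eq
    (LinearMap.range A.mulVecLin) (LinearMap.range B.mulVecLin)
  omega

lemma rank_smul_vecMulVec_le (c : ℝ) (v u : Fin N → ℝ) :
    (c • Matrix.vecMulVec v u).rank ≤ 1 := by
  have h : c • Matrix.vecMulVec v u = Matrix.vecMulVec (c • v) u := by
    ext i j
    simp only [Matrix.smul_apply, Matrix.vecMulVec_apply, Pi.smul_apply, smul_eq_mul]
    ring
  rw [h, Matrix.vecMulVec_eq (Fin 1)]
  refine le_trans (Matrix.rank_mul_le_left _ _) ?_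
  exact (Matrix.rank_le_card_width (Matrix.replicateCol (Fin 1) (c • v))).trans (by simp)

lemma rank_sum_le_card {ι : Type*} (s : Finset ι) (f : ι → Matrix (Fin N) (Fin N) ℝ)
    (h : ∀ i ∈ s, (f i).rank ≤ 1) : (∑ i ∈ s, f i).rank ≤ s.card := by
  induction s using Finset.induction with
  | empty => simp [Matrix.rank_zero]
  | @insert a s ha ih =>
    rw [Finset.sum_insert ha, Finset.card_insert_of_notMem ha]
    refine le_trans (rank_add_le' _ _) ?_
    have h1 := h a (Finset.mem_insert_self a s)
    have h2 := ih (fun i hi => h i (Finset.mem_insert_of_mem hi))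
    omega

end LinAlg

/-! ### Graph-theoretic auxiliary definitions -/

lemma wsymm (Γ : WSG n) (a b : Fin n) : Γ.w a b = Γ.w b a := by
  have h := congrFun (congrFun Γ.symm b) a
  simpa [Matrix.transpose_apply] using h

lemma graph_adj (Γ : WSG n) (a b : Fin n) :
    Γ.graph.Adj a b ↔ a ≠ b ∧ Γ.w a b ≠ 0 := by
  rw [WSG.graph, SimpleGraph.fromRel_adj]
  constructor
  · rintro ⟨hne, h | h⟩
    · exact ⟨hne, h⟩
    · exact ⟨hne, by rwa [wsymm Γ a b]⟩
  · rintro ⟨hne, h⟩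
    exact ⟨hne, Or.inl h⟩

lemma posGraph_adj (Γ : WSG n) (a b : Fin n) :
    Γ.posGraph.Adj a b ↔ a ≠ b ∧ 0 < Γ.w a b := by
  rw [WSG.posGraph, SimpleGraph.fromRel_adj]
  constructor
  · rintro ⟨hne, h | h⟩
    · exact ⟨hne, h⟩
    · exact ⟨hne, by rwa [wsymm Γ a b]⟩
  · rintro ⟨hne, h⟩
    exact ⟨hne, Or.inl h⟩

lemma negGraph_adj (Γ : WSG n) (a b : Fin n) :
    Γ.negGraph.Adj a b ↔ a ≠ b ∧ Γ.w a b < 0 := by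
  rw [WSG.negGraph, SimpleGraph.fromRel_adj]
  constructor
  · rintro ⟨hne, h | h⟩
    · exact ⟨hne, h⟩
    · exact ⟨hne, by rwa [wsymm Γ a b]⟩
  · rintro ⟨hne, h⟩
    exact ⟨hne, Or.inl h⟩

noncomputable def edgePairs (Γ : WSG n) : Finset (Fin n × Fin n) :=
  Finset.univ.filter fun p => p.1 < p.2 ∧ Γ.w p.1 p.2 ≠ 0

noncomputable def vvec (p : Fin n × Fin n) : Fin n → ℝ :=
  Pi.single p.1 1 - Pi.single p.2 1

noncomputable def fvec (Γ : WSG n) (p : Fin n × Fin n) : Fin n → ℝ :=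
  fun x => if (Γ.graph \ SimpleGraph.fromEdgeSet {s(p.1, p.2)}).Reachable p.1 x then 1 else 0

lemma vvec_dot (p : Fin n × Fin n) (x : Fin n → ℝ) : vvec p ⬝ᵥ x = x p.1 - x p.2 := by
  simp [vvec, sub_dotProduct, single_dotProduct]

lemma mem_edgePairs (Γ : WSG n) (p : Fin n × Fin n) :
    p ∈ edgePairs Γ ↔ p.1 < p.2 ∧ Γ.w p.1 p.2 ≠ 0 := by
  simp [edgePairs]

lemma adj_of_mem (Γ : WSG n) {p : Fin n × Fin n} (hp : p ∈ edgePairs Γ) :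
    Γ.graph.Adj p.1 p.2 := by
  rw [mem_edgePairs] at hp
  exact (graph_adj Γ _ _).mpr ⟨hp.1.ne, hp.2⟩

lemma sym2_ne {p q : Fin n × Fin n} (hp1 : p.1 < p.2) (hq1 : q.1 < q.2) (hne : q ≠ p) :
    s(q.1, q.2) ≠ s(p.1, p.2) := by
  intro h
  rw [Sym2.eq_iff] at h
  rcases h with ⟨h1, h2⟩ | ⟨h1, h2⟩
  · exact hne (Prod.ext h1 h2)
  · rw [h1, h2] at hq1
    exact absurd hq1 (asymm hp1)

lemma dual_pair (Γ : WSG n) (hforest : Γ.graph.IsAcyclic) {p q : Fin n × Fin n}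
    (hp : p ∈ edgePairs Γ) (hq : q ∈ edgePairs Γ) :
    vvec q ⬝ᵥ fvec Γ p = if q = p then 1 else 0 := by
  rw [vvec_dot]
  by_cases h : q = p
  · subst h
    have hbridge := SimpleGraph.isAcyclic_iff_forall_adj_isBridge.mp hforest
      (adj_of_mem Γ hp)
    rw [SimpleGraph.isBridge_iff] at hbridge
    have h1 : fvec Γ q q.1 = 1 := by
      rw [fvec, if_pos (SimpleGraph.Reachable.refl _)]
    have h2 : fvec Γ q q.2 = 0 := by unfold fvec; exact if_neg (show ¬ (Γ.graph \ SimpleGraph.fromEdgeSet {s(q.1, q.2)}).Reachable q.1 q.2 from hbridge)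
    rw [h1, h2]
    simp
  · have hadj : (Γ.graph \ SimpleGraph.fromEdgeSet {s(p.1, p.2)}).Adj q.1 q.2 := by
      rw [SimpleGraph.sdiff_adj]
      refine ⟨adj_of_mem Γ hq, ?_⟩
      rw [SimpleGraph.fromEdgeSet_adj]
      rintro ⟨hmem, -⟩
      exact sym2_ne ((mem_edgePairs Γ p).mp hp).1 ((mem_edgePairs Γ q).mp hq).1 h
        (Set.mem_singleton_iff.mp hmem)
    have : fvec Γ p q.1 = fvec Γ p q.2 := by
      unfold fvec
      by_cases hr : (Γ.graph \ SimpleGraph.fromEdgeSet {s(p.1, p.2)}).Reachable p.1 q.1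
      · rw [if_pos hr, if_pos (hr.trans hadj.reachable)]
      · rw [if_neg hr, if_neg (fun hr2 => hr (hr2.trans hadj.symm.reachable))]
    rw [this]
    simp [h]

lemma full_entry (w : Matrix (Fin n) (Fin n) ℝ) (hsymm : ∀ a b, w a b = w b a)
    (hdiag : ∀ i, w i i = 0) (a b : Fin n) :
    ∑ i, ∑ j, (-w i j) * (((if a = i then (1:ℝ) else 0) - if a = j then 1 else 0) *
      ((if b = i then (1:ℝ) else 0) - if b = j then 1 else 0))
    = 2 * (w a b - if a = b then ∑ j, w a j else 0) := by
  have expand : ∀ i j : Fin n, (-w i j) * (((if a = i then (1:ℝ) else 0) - if a = j then 1 else 0) *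
      ((if b = i then (1:ℝ) else 0) - if b = j then 1 else 0))
      = -(w i j * (if a = i then (1:ℝ) else 0) * (if b = i then (1:ℝ) else 0))
        + (w i j * (if a = i then (1:ℝ) else 0) * (if b = j then (1:ℝ) else 0))
        + (w i j * (if a = j then (1:ℝ) else 0) * (if b = i then (1:ℝ) else 0))
        - (w i j * (if a = j then (1:ℝ) else 0) * (if b = j then (1:ℝ) else 0)) := by
    intro i j; ring
  simp only [expand]
  simp only [Finset.sum_add_distrib, Finset.sum_sub_distrib, Finset.sum_neg_distrib]
  simp only [mul_ite, ite_mul, mul_one, mul_zero, one_mul, zero_mul,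
    Finset.sum_ite_eq, Finset.sum_ite_eq', Finset.mem_univ, if_true]
  by_cases hab : a = b
  · subst hab
    simp [hdiag, hsymm a, Finset.sum_ite_eq, mul_two]
    ring
  · simp [hab, Ne.symm hab, hsymm b a]
    ring

lemma lap_eq (Γ : WSG n) :
    Γ.lap = ∑ p ∈ edgePairs Γ, (-Γ.w p.1 p.2) • Matrix.vecMulVec (vvec p) (vvec p) := by
  set F : Fin n × Fin n → Matrix (Fin n) (Fin n) ℝ :=
    fun p => (-Γ.w p.1 p.2) • Matrix.vecMulVec (vvec p) (vvec p) with hF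
  have h0 : ∑ p ∈ edgePairs Γ, F p
      = ∑ p ∈ Finset.univ.filter (fun p : Fin n × Fin n => p.1 < p.2), F p := by
    refine Finset.sum_subset ?_ ?_
    · intro p hp
      simp only [edgePairs, Finset.mem_filter] at hp ⊢
      exact ⟨hp.1, hp.2.1⟩
    · intro p hp hnp
      simp only [edgePairs, Finset.mem_filter, Finset.mem_univ, true_and] at hp hnp
      have : Γ.w p.1 p.2 = 0 := by
        by_contra hw
        exact hnp ⟨hp, hw⟩
      rw [hF]
      simp [this]
  have hdiagzero : ∀ p : Fin n × Fin n, p.1 = p.2 → F p = 0 := by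
    intro p hp
    have : vvec p = 0 := by
      rw [vvec, hp, sub_self]
    rw [hF]
    simp [this, Matrix.vecMulVec]
    ext i j
    simp
  have hswap : ∀ p : Fin n × Fin n, F (p.2, p.1) = F p := by
    intro p
    ext i j
    rw [hF]
    simp only [Matrix.smul_apply, Matrix.vecMulVec_apply, smul_eq_mul, vvec]
    rw [wsymm Γ p.2 p.1]
    simp only [Pi.sub_apply]
    ring
  have hgt : ∑ p ∈ Finset.univ.filter (fun p : Fin n × Fin n => ¬ p.1 < p.2), F p
      = ∑ p ∈ Finset.univ.filter (fun p : Fin n × Fin n => p.1 < p.2), F p := by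
    rw [show ∑ p ∈ Finset.univ.filter (fun p : Fin n × Fin n => ¬ p.1 < p.2), F p
        = ∑ p ∈ Finset.univ.filter (fun p : Fin n × Fin n => p.2 < p.1), F p from ?_]
    · refine Finset.sum_nbij' (fun p => (p.2, p.1)) (fun p => (p.2, p.1)) ?_ ?_ ?_ ?_ ?_
      · intro p hp
        simp only [Finset.mem_filter, Finset.mem_univ, true_and] at hp ⊢
        exact hp
      · intro p hp
        simp only [Finset.mem_filter, Finset.mem_univ, true_and] at hp ⊢
        exact hp
      · intro p _; rfl
      · intro p _; rfl
      · intro p _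
        exact (hswap p).symm
    · symm
      refine Finset.sum_subset ?_ ?_
      · intro p hp
        simp only [Finset.mem_filter, Finset.mem_univ, true_and] at hp ⊢
        exact not_lt_of_gt hp
      · intro p hp hnp
        simp only [Finset.mem_filter, Finset.mem_univ, true_and, not_lt] at hp hnp
        exact hdiagzero p (le_antisymm hnp hp)
  have hfull : ∑ p : Fin n × Fin n, F p
      = (∑ p ∈ Finset.univ.filter (fun p : Fin n × Fin n => p.1 < p.2), F p)
        + ∑ p ∈ Finset.univ.filter (fun p : Fin n × Fin n => p.1 < p.2), F p := by
    rw [← Finset.sum_filter_add_sum_filter_not Finset.univ (fun p : Fin n × Fin n => p.1 < p.2) F,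
      hgt]
  have hentry : ∀ a b, (∑ p : Fin n × Fin n, F p) a b = 2 * Γ.lap a b := by
    intro a b
    rw [Matrix.sum_apply, Fintype.sum_prod_type]
    have hFab : ∀ i j : Fin n, F (i,j) a b = (-Γ.w i j) *
        (((if a = i then (1:ℝ) else 0) - if a = j then 1 else 0) *
          ((if b = i then (1:ℝ) else 0) - if b = j then 1 else 0)) := by
      intro i j
      rw [hF]
      simp only [Matrix.smul_apply, Matrix.vecMulVec_apply, smul_eq_mul, vvec, Pi.sub_apply,
        Pi.single_apply]
    simp only [hFab]
    rw [full_entry Γ.w (wsymm Γ) Γ.loopless a b, WSG.lap]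
    simp [Matrix.diagonal_apply]
  have h2m : ∑ p : Fin n × Fin n, F p
      = (∑ p ∈ edgePairs Γ, F p) + ∑ p ∈ edgePairs Γ, F p := by
    rw [h0]; exact hfull
  ext a b
  have h2 := congrFun (congrFun h2m a) b
  simp only [Matrix.add_apply] at h2
  have := hentry a b
  rw [h2] at this
  have hlap : Γ.lap a b = (∑ p ∈ edgePairs Γ, F p) a b := by linarith
  rw [hlap]

lemma quad_eq (Γ : WSG n) (x : Fin n → ℝ) :
    x ⬝ᵥ (Γ.lap *ᵥ x) = ∑ p ∈ edgePairs Γ, (-Γ.w p.1 p.2) * (vvec p ⬝ᵥ x) ^ 2 := by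
  rw [lap_eq Γ, matSum_mulVec, dot_sum]
  refine Finset.sum_congr rfl fun p _ => ?_
  rw [Matrix.smul_mulVec, vecMulVec_mulVec', dotProduct_smul,
    dotProduct_smul, dotProduct_comm x (vvec p)]
  simp only [smul_eq_mul]
  ring

lemma card_edgeSet_eq (G : SimpleGraph (Fin n)) :
    Nat.card G.edgeSet
      = (Finset.univ.filter fun p : Fin n × Fin n => p.1 < p.2 ∧ G.Adj p.1 p.2).card := by
  rw [Nat.card_coe_set_eq, Set.ncard_eq_toFinset_card']
  symm
  refine Finset.card_bij (fun p _ => s(p.1, p.2)) ?_ ?_ ?_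
  · intro p hp
    simp only [Finset.mem_filter, Finset.mem_univ, true_and] at hp
    simp only [Set.mem_toFinset, SimpleGraph.mem_edgeSet]
    exact hp.2
  · intro p hp q hq h
    simp only [Finset.mem_filter, Finset.mem_univ, true_and] at hp hq
    rw [Sym2.eq_iff] at h
    rcases h with ⟨h1, h2⟩ | ⟨h1, h2⟩
    · exact Prod.ext h1 h2
    · rw [← h1, ← h2] at hq
      exact absurd hq.1 (asymm hp.1)
  · intro e he
    simp only [Set.mem_toFinset] at he
    induction e using Sym2.ind with
    | _ x y =>
      have hadj : G.Adj x y := he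
      rcases lt_or_gt_of_ne hadj.ne with h | h
      · exact ⟨(x, y), by simp [h, hadj], rfl⟩
      · exact ⟨(y, x), by simp [h, hadj.symm], Sym2.eq_swap⟩

lemma card_neg_edges (Γ : WSG n) :
    Nat.card Γ.negGraph.edgeSet
      = ((edgePairs Γ).filter fun p => Γ.w p.1 p.2 < 0).card := by
  rw [card_edgeSet_eq]
  congr 1
  ext p
  simp only [Finset.mem_filter, Finset.mem_univ, true_and, mem_edgePairs, negGraph_adj]
  constructor
  · rintro ⟨h1, -, h3⟩
    exact ⟨⟨h1, ne_of_lt h3⟩, h3⟩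
  · rintro ⟨⟨h1, -⟩, h3⟩
    exact ⟨h1, h1.ne, h3⟩

lemma card_pos_edges (Γ : WSG n) :
    Nat.card Γ.posGraph.edgeSet
      = ((edgePairs Γ).filter fun p => 0 < Γ.w p.1 p.2).card := by
  rw [card_edgeSet_eq]
  congr 1
  ext p
  simp only [Finset.mem_filter, Finset.mem_univ, true_and, mem_edgePairs, posGraph_adj]
  constructor
  · rintro ⟨h1, -, h3⟩
    exact ⟨⟨h1, ne_of_gt h3⟩, h3⟩
  · rintro ⟨⟨h1, -⟩, h3⟩
    exact ⟨h1, h1.ne, h3⟩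


lemma quad_on_span (Γ : WSG n) (hforest : Γ.graph.IsAcyclic)
    (S : Finset (Fin n × Fin n)) (hS : S ⊆ edgePairs Γ) (c : ↥S → ℝ) :
    (∑ e : ↥S, c e • fvec Γ e.1) ⬝ᵥ (Γ.lap *ᵥ (∑ e : ↥S, c e • fvec Γ e.1))
      = ∑ e : ↥S, (-Γ.w e.1.1 e.1.2) * (c e) ^ 2 := by
  set x := ∑ e : ↥S, c e • fvec Γ e.1 with hx
  have hdot : ∀ p ∈ edgePairs Γ, vvec p ⬝ᵥ x
      = if hp : p ∈ S then c ⟨p, hp⟩ else 0 := by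
    intro p hp
    rw [hx, dot_sum]
    have hterm : ∀ e : ↥S, vvec p ⬝ᵥ (c e • fvec Γ e.1)
        = c e * (if p = e.1 then 1 else 0) := by
      intro e
      rw [dotProduct_smul, dual_pair Γ hforest (hS e.2) hp]
      simp
    simp only [hterm]
    by_cases hpS : p ∈ S
    · rw [dif_pos hpS, Finset.sum_eq_single (⟨p, hpS⟩ : ↥S)]
      · simp
      · intro e _ he
        have : ¬ (p = e.1) := fun hh => he (by apply Subtype.ext; simp [← hh])
        simp [this]
      · simp
    · rw [dif_neg hpS]
      apply Finset.sum_eq_zero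
      intro e _
      have : ¬ (p = e.1) := fun hh => hpS (hh ▸ e.2)
      simp [this]
  rw [quad_eq Γ x]
  rw [show ∑ p ∈ edgePairs Γ, (-Γ.w p.1 p.2) * (vvec p ⬝ᵥ x) ^ 2
      = ∑ p ∈ S, (-Γ.w p.1 p.2) * (vvec p ⬝ᵥ x) ^ 2 from ?_]
  · rw [← Finset.sum_attach S (fun p => (-Γ.w p.1 p.2) * (vvec p ⬝ᵥ x) ^ 2),
      Finset.univ_eq_attach]
    refine Finset.sum_congr rfl fun e _ => ?_
    rw [hdot e.1 (hS e.2), dif_pos e.2]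
  · symm
    refine Finset.sum_subset hS ?_
    intro p hpE hpS
    rw [hdot p hpE, dif_neg hpS]
    simp

lemma span_bound_pos (Γ : WSG n) (hforest : Γ.graph.IsAcyclic) :
    ((edgePairs Γ).filter fun p => Γ.w p.1 p.2 < 0).card
      ≤ (Finset.univ.filter fun i => 0 < Γ.lap_isHermitian.eigenvalues i).card := by
  set S := (edgePairs Γ).filter (fun p => Γ.w p.1 p.2 < 0) with hSdef
  have hS : S ⊆ edgePairs Γ := Finset.filter_subset _ _
  set fP : ↥S → (Fin n → ℝ) := fun e => fvec Γ e.1 with hfP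
  set vP : ↥S → (Fin n → ℝ) := fun e => vvec e.1 with hvP
  have hdual : ∀ i j : ↥S, vP i ⬝ᵥ fP j = if i = j then 1 else 0 := by
    intro i j
    rw [hvP, hfP]
    simp only []
    rw [dual_pair Γ hforest (hS j.2) (hS i.2)]
    by_cases h : i = j
    · simp [h]
    · have : ¬ (i.1 = j.1) := fun hh => h (Subtype.ext hh)
      simp [h, this]
  have hli := li_of_dual vP fP hdual
  set W := Submodule.span ℝ (Set.range fP) with hW
  have hrank : Module.finrank ℝ W = S.card := by
    rw [hW, finrank_span_eq_card hli, Fintype.card_coe]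
  have hposdef : ∀ x ∈ W, x ≠ 0 → 0 < x ⬝ᵥ (Γ.lap *ᵥ x) := by
    intro x hxW hx0
    obtain ⟨c, hc⟩ := Submodule.mem_span_range_iff_exists_fun ℝ |>.mp hxW
    have hcx : x = ∑ e : ↥S, c e • fvec Γ e.1 := hc.symm
    rw [hcx, quad_on_span Γ hforest S hS c]
    have hex : ∃ e : ↥S, c e ≠ 0 := by
      by_contra hall
      push_neg at hall
      apply hx0
      rw [hcx]
      simp [hall]
    obtain ⟨e₀, he₀⟩ := hex
    have hnonneg : ∀ e : ↥S, e ∈ (Finset.univ : Finset ↥S)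
        → 0 ≤ (-Γ.w e.1.1 e.1.2) * (c e) ^ 2 := by
      intro e _
      have := (Finset.mem_filter.mp e.2).2
      nlinarith [sq_nonneg (c e)]
    refine Finset.sum_pos' hnonneg ⟨e₀, Finset.mem_univ _, ?_⟩
    have hneg := (Finset.mem_filter.mp e₀.2).2
    have hsq : 0 < (c e₀) ^ 2 :=
      lt_of_le_of_ne (sq_nonneg _) (Ne.symm (pow_ne_zero 2 he₀))
    nlinarith
  calc S.card = Module.finrank ℝ W := hrank.symm
    _ ≤ _ := finrank_le_card_pos Γ.lap_isHermitian W hposdef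

lemma span_bound_neg (Γ : WSG n) (hforest : Γ.graph.IsAcyclic) :
    ((edgePairs Γ).filter fun p => 0 < Γ.w p.1 p.2).card
      ≤ (Finset.univ.filter fun i => Γ.lap_isHermitian.eigenvalues i < 0).card := by
  set S := (edgePairs Γ).filter (fun p => 0 < Γ.w p.1 p.2) with hSdef
  have hS : S ⊆ edgePairs Γ := Finset.filter_subset _ _
  set fP : ↥S → (Fin n → ℝ) := fun e => fvec Γ e.1 with hfP
  set vP : ↥S → (Fin n → ℝ) := fun e => vvec e.1 with hvP
  have hdual : ∀ i j : ↥S, vP i ⬝ᵥ fP j = if i = j then 1 else 0 := by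
    intro i j
    rw [hvP, hfP]
    simp only []
    rw [dual_pair Γ hforest (hS j.2) (hS i.2)]
    by_cases h : i = j
    · simp [h]
    · have : ¬ (i.1 = j.1) := fun hh => h (Subtype.ext hh)
      simp [h, this]
  have hli := li_of_dual vP fP hdual
  set W := Submodule.span ℝ (Set.range fP) with hW
  have hrank : Module.finrank ℝ W = S.card := by
    rw [hW, finrank_span_eq_card hli, Fintype.card_coe]
  have hnegdef : ∀ x ∈ W, x ≠ 0 → x ⬝ᵥ (Γ.lap *ᵥ x) < 0 := by
    intro x hxW hx0
    obtain ⟨c, hc⟩ := Submodule.mem_span_range_iff_exists_fun ℝ |>.mp hxW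
    have hcx : x = ∑ e : ↥S, c e • fvec Γ e.1 := hc.symm
    rw [hcx, quad_on_span Γ hforest S hS c]
    have hex : ∃ e : ↥S, c e ≠ 0 := by
      by_contra hall
      push_neg at hall
      apply hx0
      rw [hcx]
      simp [hall]
    obtain ⟨e₀, he₀⟩ := hex
    have hkey : 0 < ∑ e : ↥S, (Γ.w e.1.1 e.1.2) * (c e) ^ 2 := by
      have hnonneg : ∀ e : ↥S, e ∈ (Finset.univ : Finset ↥S)
          → 0 ≤ (Γ.w e.1.1 e.1.2) * (c e) ^ 2 := by
        intro e _
        have := (Finset.mem_filter.mp e.2).2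
        nlinarith [sq_nonneg (c e)]
      refine Finset.sum_pos' hnonneg ⟨e₀, Finset.mem_univ _, ?_⟩
      have hpos := (Finset.mem_filter.mp e₀.2).2
      have hsq : 0 < (c e₀) ^ 2 :=
        lt_of_le_of_ne (sq_nonneg _) (Ne.symm (pow_ne_zero 2 he₀))
      nlinarith
    have : ∑ e : ↥S, (-Γ.w e.1.1 e.1.2) * (c e) ^ 2
        = - ∑ e : ↥S, (Γ.w e.1.1 e.1.2) * (c e) ^ 2 := by
      rw [← Finset.sum_neg_distrib]
      exact Finset.sum_congr rfl fun e _ => by ring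
    rw [this]
    linarith
  calc S.card = Module.finrank ℝ W := hrank.symm
    _ ≤ _ := finrank_le_card_neg Γ.lap_isHermitian W hnegdef

lemma rank_lap_le (Γ : WSG n) : Γ.lap.rank ≤ (edgePairs Γ).card := by
  rw [lap_eq Γ]
  exact rank_sum_le_card _ _ fun p _ => rank_smul_vecMulVec_le _ _ _

lemma comps_add (Γ : WSG n) (hforest : Γ.graph.IsAcyclic) :
    comps Γ.graph + (edgePairs Γ).card = n := by
  classical
  set E := edgePairs Γ with hE
  let Ψ : (Fin n → ℝ) →ₗ[ℝ] (↥E → ℝ) :=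
    { toFun := fun x e => x e.1.1 - x e.1.2
      map_add' := by intro x y; funext e; simp; ring
      map_smul' := by intro a x; funext e; simp; ring }
  have hΨapp : ∀ (x : Fin n → ℝ) (e : ↥E), Ψ x e = x e.1.1 - x e.1.2 := fun _ _ => rfl
  have hΨsurj : LinearMap.range Ψ = ⊤ := by
    rw [LinearMap.range_eq_top]
    intro g
    refine ⟨∑ e : ↥E, g e • fvec Γ e.1, ?_⟩
    funext e
    rw [hΨapp, ← vvec_dot e.1, dot_sum]
    have hterm : ∀ e' : ↥E, vvec e.1 ⬝ᵥ (g e' • fvec Γ e'.1)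
        = g e' * (if e.1 = e'.1 then 1 else 0) := by
      intro e'
      rw [dotProduct_smul, dual_pair Γ hforest e'.2 e.2]
      simp
    simp only [hterm]
    rw [Finset.sum_eq_single e]
    · simp
    · intro e' _ he'
      have : ¬ (e.1 = e'.1) := fun hh => he' (Subtype.ext hh.symm)
      simp [this]
    · simp
  have hkerΨ : (E.card : ℕ) + Module.finrank ℝ (LinearMap.ker Ψ) = n := by
    have h := LinearMap.finrank_range_add_finrank_ker Ψ
    rw [hΨsurj, finrank_top] at h
    simpa [Module.finrank_fintype_fun_eq_card, Fintype.card_coe] using h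
  letI : Fintype Γ.graph.ConnectedComponent := Fintype.ofFinite _
  let φ : (Γ.graph.ConnectedComponent → ℝ) →ₗ[ℝ] (Fin n → ℝ) :=
    { toFun := fun g i => g (Γ.graph.connectedComponentMk i)
      map_add' := by intro x y; rfl
      map_smul' := by intro a x; rfl }
  have hφinj : Function.Injective φ := by
    intro g₁ g₂ h
    funext C
    obtain ⟨i, rfl⟩ := C.exists_rep
    exact congrFun h i
  have hφrange : LinearMap.range φ = LinearMap.ker Ψ := by
    apply le_antisymm
    · rintro _ ⟨g, rfl⟩
      rw [LinearMap.mem_ker]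
      funext e
      rw [hΨapp]
      show g (Γ.graph.connectedComponentMk e.1.1)
          - g (Γ.graph.connectedComponentMk e.1.2) = 0
      rw [SimpleGraph.ConnectedComponent.connectedComponentMk_eq_of_adj (adj_of_mem Γ e.2), sub_self]
    · intro x hx
      rw [LinearMap.mem_ker] at hx
      have hedge : ∀ e : ↥E, x e.1.1 = x e.1.2 := by
        intro e
        have := congrFun hx e
        rw [hΨapp] at this
        exact sub_eq_zero.mp this
      have hadjx : ∀ a b, Γ.graph.Adj a b → x a = x b := by
        intro a b hab
        rw [graph_adj] at hab
        rcases lt_or_gt_of_ne hab.1 with h | h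
        · exact hedge ⟨(a, b), (mem_edgePairs Γ _).mpr ⟨h, hab.2⟩⟩
        · refine (hedge ⟨(b, a), (mem_edgePairs Γ _).mpr ⟨h, ?_⟩⟩).symm
          intro hw
          exact hab.2 (by rw [wsymm]; exact hw)
      have hreach : ∀ a b, Γ.graph.Reachable a b → x a = x b := by
        intro a b hr
        obtain ⟨wp⟩ := hr
        induction wp with
        | nil => rfl
        | cons h p ih => exact (hadjx _ _ h).trans ih
      refine ⟨fun C => x C.out, ?_⟩
      funext i
      show x (Γ.graph.connectedComponentMk i).out = x i
      apply hreach
      exact SimpleGraph.ConnectedComponent.exact (Γ.graph.connectedComponentMk i).out_eq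
  have hcomps : comps Γ.graph = Module.finrank ℝ (LinearMap.ker Ψ) := by
    rw [comps, Nat.card_eq_fintype_card, ← hφrange, LinearMap.finrank_range_of_inj hφinj,
      Module.finrank_fintype_fun_eq_card]
  omega

/-! ### Eigenvalue counting -/

lemma eig_counts (Γ : WSG n) :
    Γ.nPos + Γ.nNeg = Γ.lap.rank ∧ Γ.nPos + Γ.nNeg + Γ.nZero = n := by
  set μ := Γ.lap_isHermitian.eigenvalues with hμ
  have hsplit : Finset.univ.filter (fun i => μ i ≠ 0)
      = Finset.univ.filter (fun i => 0 < μ i) ∪ Finset.univ.filter (fun i => μ i < 0) := by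
    ext i
    simp only [Finset.mem_filter, Finset.mem_univ, true_and, Finset.mem_union]
    constructor
    · intro h
      rcases h.lt_or_gt with h' | h'
      · exact Or.inr h'
      · exact Or.inl h'
    · rintro (h | h)
      · exact ne_of_gt h
      · exact ne_of_lt h
  have hdisj : Disjoint (Finset.univ.filter (fun i => 0 < μ i))
      (Finset.univ.filter (fun i => μ i < 0)) := by
    rw [Finset.disjoint_left]
    intro i hi hj
    simp only [Finset.mem_filter, Finset.mem_univ, true_and] at hi hj
    exact absurd hi (not_lt.mpr hj.le)
  have hrank : Γ.lap.rank = (Finset.univ.filter (fun i => μ i ≠ 0)).card := by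
    rw [Γ.lap_isHermitian.rank_eq_card_non_zero_eigs, Fintype.card_subtype]
  have h1 : Γ.nPos + Γ.nNeg = Γ.lap.rank := by
    rw [hrank, hsplit, Finset.card_union_of_disjoint hdisj]
    rfl
  have h2 : Γ.nZero + (Finset.univ.filter (fun i => μ i ≠ 0)).card = n := by
    have := Finset.card_filter_add_card_filter_not
      (s := (Finset.univ : Finset (Fin n))) (p := fun i => μ i = 0)
    simpa [WSG.nZero] using this
  exact ⟨h1, by omega⟩

/-- A weighted signed forest on `n` vertices with `m₊` positive edges, `m₋`
negative edges and `c` components has Laplacian inertia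
`(m₋, m₊, n - m₊ - m₋)`, and its nullity is `c`. -/
theorem forest_inertia {n : ℕ} (Γ : WSG n) (hforest : Γ.graph.IsAcyclic) :
    Γ.inertia = (Nat.card Γ.negGraph.edgeSet, Nat.card Γ.posGraph.edgeSet,
      n - Nat.card Γ.posGraph.edgeSet - Nat.card Γ.negGraph.edgeSet) ∧
    Γ.nZero = comps Γ.graph := by
  have a1 : ((edgePairs Γ).filter fun p => Γ.w p.1 p.2 < 0).card ≤ Γ.nPos :=
    span_bound_pos Γ hforest
  have a2 : ((edgePairs Γ).filter fun p => 0 < Γ.w p.1 p.2).card ≤ Γ.nNeg :=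
    span_bound_neg Γ hforest
  obtain ⟨b1, b2⟩ := eig_counts Γ
  have a3 : Γ.nPos + Γ.nNeg ≤ (edgePairs Γ).card := b1 ▸ rank_lap_le Γ
  have a4 : ((edgePairs Γ).filter fun p => Γ.w p.1 p.2 < 0).card
      + ((edgePairs Γ).filter fun p => 0 < Γ.w p.1 p.2).card = (edgePairs Γ).card := by
    have hsplit : (edgePairs Γ).filter (fun p => ¬ Γ.w p.1 p.2 < 0)
        = (edgePairs Γ).filter (fun p => 0 < Γ.w p.1 p.2) := by
      ext p
      simp only [Finset.mem_filter, mem_edgePairs, not_lt]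
      constructor
      · rintro ⟨⟨h1, h2⟩, h3⟩
        exact ⟨⟨h1, h2⟩, lt_of_le_of_ne h3 (Ne.symm h2)⟩
      · rintro ⟨⟨h1, h2⟩, h3⟩
        exact ⟨⟨h1, h2⟩, h3.le⟩
    have := Finset.card_filter_add_card_filter_not
      (s := edgePairs Γ) (p := fun p => Γ.w p.1 p.2 < 0)
    rwa [hsplit] at this
  have a6 : comps Γ.graph + (edgePairs Γ).card = n := comps_add Γ hforest
  have c1 := card_neg_edges Γ
  have c2 := card_pos_edges Γ
  have e1 : Γ.nPos = Nat.card Γ.negGraph.edgeSet := by omega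
  have e2 : Γ.nNeg = Nat.card Γ.posGraph.edgeSet := by omega
  have e3 : Γ.nZero = n - Nat.card Γ.posGraph.edgeSet - Nat.card Γ.negGraph.edgeSet := by
    omega
  refine ⟨?_, by omega⟩
  rw [WSG.inertia, e1, e2, e3]

end SGPaper
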